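/- Corollary (solving the RL verification problem via the abstraction). Let S_0 ⊆ S be a set of initial states, Ŝ_0 ⊆ Ŝ a set of initial abstract states such that every s ∈ S_0 belongs to some ŝ ∈ Ŝ_0, and let p_safe ∈ [0,1] and k ∈ ℕ. If v̂(ŝ,k) ≤ p_safe for every ŝ ∈ Ŝ_0, then p(s,k) ≤ p_safe for every s ∈ S_0. -/
import Mathlib


/-- Corollary: solving the RL verification problem via the abstraction. If every
initial concrete state is covered by some initial abstract state and the abstract
value at horizon k of every initial abstract state is at most p_safe ∈ [0,1], then
the k-step failure probability from every initial concrete state is at most p_safe. -/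
theorem rl_verification_via_abstraction
    {S : Type*} {A : Type*} [Fintype A] [Nonempty A]
    (E : S → A → S) (π : S → A → ℝ) (F : Set S)
    (hπ_nonneg : ∀ s a, 0 ≤ π s a)
    (hπ_sum : ∀ s, ∑ a, π s a = 1)
    -- the k-step failure probability of the concrete model
    (p : S → ℕ → ℝ)
    (hp_fail : ∀ s k, s ∈ F → p s k = 1)
    (hp_zero : ∀ s, s ∉ F → p s 0 = 0)
    (hp_succ : ∀ s k, s ∉ F → p s (k + 1) = ∑ a, π s a * p (E s a) k)
    -- the IMDP abstraction: a finite set of abstract states, each a subset of S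
    {Shat : Type*} [Fintype Shat]
    (conc : Shat → Set S)
    -- each abstract state is equipped with a finite nonempty family of pieces
    (J : Shat → Type*) [∀ sh, Fintype (J sh)] [∀ sh, Nonempty (J sh)]
    (piece : (sh : Shat) → J sh → Set S)
    (hcover : ∀ sh, conc sh ⊆ ⋃ j, piece sh j)
    -- environment abstraction
    (Ehat : (sh : Shat) → J sh → A → Shat)
    (hEhat : ∀ sh (j : J sh) (a : A) (s : S), s ∈ piece sh j → E s a ∈ conc (Ehat sh j a))
    -- policy upper bounds
    (πU : (sh : Shat) → J sh → A → ℝ)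
    (hπU_nonneg : ∀ sh (j : J sh) (a : A), 0 ≤ πU sh j a)
    (hπU : ∀ sh (j : J sh) (a : A) (s : S), s ∈ piece sh j → π s a ≤ πU sh j a)
    -- fail labelling
    (failLab : Shat → Prop)
    (hfail : ∀ sh, (conc sh ∩ F).Nonempty → failLab sh)
    -- the abstract value
    (vhat : Shat → ℕ → ℝ)
    (hv_fail : ∀ sh k, failLab sh → vhat sh k = 1)
    (hv_zero : ∀ sh, ¬ failLab sh → vhat sh 0 = 0)
    (hv_succ : ∀ sh k, ¬ failLab sh →
      vhat sh (k + 1) =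
        Finset.univ.sup' Finset.univ_nonempty
          (fun j : J sh => ∑ a, πU sh j a * vhat (Ehat sh j a) k))
    (S0 : Set S) (Shat0 : Set Shat)
    (hinit : ∀ s ∈ S0, ∃ sh ∈ Shat0, s ∈ conc sh)
    (p_safe : ℝ) (hp_safe : 0 ≤ p_safe ∧ p_safe ≤ 1) (k : ℕ)
    (hbound : ∀ sh ∈ Shat0, vhat sh k ≤ p_safe) :
    ∀ s ∈ S0, p s k ≤ p_safe := by

  -- p is in [0,1]
  have hp01 : ∀ k s, 0 ≤ p s k ∧ p s k ≤ 1 := by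
    intro k
    induction k with
    | zero =>
      intro s
      by_cases hs : s ∈ F
      · rw [hp_fail s 0 hs]; norm_num
      · rw [hp_zero s hs]; norm_num
    | succ n ih =>
      intro s
      by_cases hs : s ∈ F
      · rw [hp_fail s (n+1) hs]; norm_num
      · rw [hp_succ s n hs]
        constructor
        · exact Finset.sum_nonneg fun a _ =>
            mul_nonneg (hπ_nonneg s a) (ih (E s a)).1
        · calc ∑ a, π s a * p (E s a) n ≤ ∑ a, π s a * 1 :=
                Finset.sum_le_sum fun a _ =>
                  mul_le_mul_of_nonneg_left (ih (E s a)).2 (hπ_nonneg s a)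
            _ = 1 := by simp [hπ_sum s]
  -- vhat is nonnegative
  have hv0 : ∀ k sh, 0 ≤ vhat sh k := by
    intro k
    induction k with
    | zero =>
      intro sh
      by_cases hf : failLab sh
      · rw [hv_fail sh 0 hf]; norm_num
      · rw [hv_zero sh hf]
    | succ n ih =>
      intro sh
      by_cases hf : failLab sh
      · rw [hv_fail sh (n+1) hf]; norm_num
      · rw [hv_succ sh n hf]
        obtain ⟨j⟩ := ‹∀ sh, Nonempty (J sh)› sh
        refine le_trans ?_ (Finset.le_sup' _ (Finset.mem_univ j))
        exact Finset.sum_nonneg fun a _ =>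
          mul_nonneg (hπU_nonneg sh j a) (ih (Ehat sh j a))
  -- soundness: p s k ≤ vhat sh k whenever s ∈ conc sh
  have hsound : ∀ k sh s, s ∈ conc sh → p s k ≤ vhat sh k := by
    intro k
    induction k with
    | zero =>
      intro sh s hmem
      by_cases hs : s ∈ F
      · rw [hp_fail s 0 hs, hv_fail sh 0 (hfail sh ⟨s, hmem, hs⟩)]
      · rw [hp_zero s hs]; exact hv0 0 sh
    | succ n ih =>
      intro sh s hmem
      by_cases hf : failLab sh
      · rw [hv_fail sh (n+1) hf]; exact (hp01 (n+1) s).2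
      · have hs : s ∉ F := fun hs => hf (hfail sh ⟨s, hmem, hs⟩)
        obtain ⟨j, hj⟩ := Set.mem_iUnion.1 (hcover sh hmem)
        rw [hp_succ s n hs, hv_succ sh n hf]
        refine le_trans ?_ (Finset.le_sup' _ (Finset.mem_univ j))
        refine Finset.sum_le_sum fun a _ => ?_
        calc π s a * p (E s a) n
            ≤ π s a * vhat (Ehat sh j a) n :=
              mul_le_mul_of_nonneg_left
                (ih (Ehat sh j a) (E s a) (hEhat sh j a s hj)) (hπ_nonneg s a)
          _ ≤ πU sh j a * vhat (Ehat sh j a) n :=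
              mul_le_mul_of_nonneg_right (hπU sh j a s hj) (hv0 n (Ehat sh j a))
  intro s hs
  obtain ⟨sh, hsh0, hmem⟩ := hinit s hs
  exact le_trans (hsound k sh s hmem) (hbound sh hsh0)
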